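/- Let k be a field and L a finite separable field extension of k(x) of degree 3, with A₀ the integral closure of k[x] in L. Suppose (1, α₁, α₂) is a normal basis of A₀ over k[x] (so α₁α₂ ∈ k[x]·1), with multiplication table α₁² = −g₁ + f₂α₁ − f₃α₂ and α₂² = −g₂ + f₀α₁ − f₁α₂ for f₀, f₁, f₂, f₃ ∈ k[x]. Then the cubic polynomial f₃y³ + f₂y² + f₁y + f₀ ∈ k(x)[y] is irreducible over k(x), there is a k(x)-algebra isomorphism L ≅ k(x)[y]/(f₃y³ + f₂y² + f₁y + f₀) under which the k[x]-module A₀ corresponds to k[x]·1 + k[x]·(f₃y) + k[x]·(f₃y² + f₂y + f₁); in particular (1, f₃y, f₃y² + f₂y + f₁) is an integral basis of k(x)[y]/(f₃y³ + f₂y² + f₁y + f₀) over k[x]. -/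

import Mathlib

set_option maxHeartbeats 1000000 in
open Polynomial in
/-- Let `k` be a field and `L` a degree-`3` separable extension of `k(x)`, with `A₀` the
integral closure of `k[x]` in `L` (realized as the integral closure of the subalgebra
generated over `k` by the image `xL` of `x`).  Suppose `(1, α₁, α₂)` is a normal
`k[x]`-basis of `A₀` with multiplication table `α₁α₂ = −g₀`, `α₁² = −g₁ + f₂α₁ − f₃α₂`,
`α₂² = −g₂ + f₀α₁ − f₁α₂`.  Then the cubic `f₃y³ + f₂y² + f₁y + f₀ ∈ k(x)[y]` is
irreducible over `k(x)`, and there is a `k(x)`-algebra isomorphism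
`L ≅ k(x)[y]/(f₃y³ + f₂y² + f₁y + f₀)` under which `A₀` corresponds to
`k[x]·1 + k[x]·(f₃y) + k[x]·(f₃y² + f₂y + f₁)`; in particular
`(1, f₃y, f₃y² + f₂y + f₁)` is an integral basis over `k[x]` (the uniqueness-of-
representation clause expresses its `k[x]`-linear independence). -/
theorem stmt_10 (k L : Type*) [Field k] [Field L] [Algebra (RatFunc k) L] [Algebra k L]
    [IsScalarTower k (RatFunc k) L] [Algebra.IsSeparable (RatFunc k) L]
    (hdim : Module.finrank (RatFunc k) L = 3)
    (xL : L) (hxL : xL = algebraMap (RatFunc k) L RatFunc.X)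
    (R0 : Subalgebra k L) (hR0 : R0 = Algebra.adjoin k {xL})
    (α₁ α₂ : L)
    (hindep0 : LinearIndependent ↥R0 ![(1 : L), α₁, α₂])
    (hspan0 : Submodule.span ↥R0 (Set.range ![(1 : L), α₁, α₂]) =
      Subalgebra.toSubmodule (integralClosure ↥R0 L))
    (φ : Polynomial k → L)
    (hφ : ∀ p, φ p = algebraMap (RatFunc k) L (algebraMap (Polynomial k) (RatFunc k) p))
    (f₀ f₁ f₂ f₃ g₀ g₁ g₂ : Polynomial k)
    (htable0 : α₁ * α₂ = -φ g₀)
    (htable1 : α₁ * α₁ = -φ g₁ + φ f₂ * α₁ - φ f₃ * α₂)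
    (htable2 : α₂ * α₂ = -φ g₂ + φ f₀ * α₁ - φ f₁ * α₂)
    (ψ : Polynomial k → Polynomial (RatFunc k))
    (hψ : ∀ p, ψ p = C (algebraMap (Polynomial k) (RatFunc k) p))
    (P : Polynomial (RatFunc k))
    (hP : P = ψ f₃ * X ^ 3 + ψ f₂ * X ^ 2 + ψ f₁ * X + ψ f₀)
    (u w : Polynomial (RatFunc k) ⧸ Ideal.span {P})
    (hu : u = Ideal.Quotient.mk (Ideal.span {P}) (ψ f₃ * X))
    (hw : w = Ideal.Quotient.mk (Ideal.span {P}) (ψ f₃ * X ^ 2 + ψ f₂ * X + ψ f₁))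
    (χ : Polynomial k → Polynomial (RatFunc k) ⧸ Ideal.span {P})
    (hχ : ∀ p, χ p = Ideal.Quotient.mk (Ideal.span {P}) (ψ p)) :
    Irreducible P ∧
    ∃ e : L ≃ₐ[RatFunc k] (Polynomial (RatFunc k) ⧸ Ideal.span {P}),
      (⇑e '' (integralClosure ↥R0 L : Set L) =
        {z | ∃ p q r : Polynomial k, z = χ p + χ q * u + χ r * w}) ∧
      (∀ p q r p' q' r' : Polynomial k,
        χ p + χ q * u + χ r * w = χ p' + χ q' * u + χ r' * w →
          p = p' ∧ q = q' ∧ r = r') := by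
  have hφinj : Function.Injective φ := by
    intro a b hab
    rw [hφ, hφ] at hab
    exact IsFractionRing.injective (Polynomial k) (RatFunc k)
      ((algebraMap (RatFunc k) L).injective hab)
  have haev : ∀ p : Polynomial k, aeval xL p = φ p := by
    intro p
    have hxL' : xL = (IsScalarTower.toAlgHom k (RatFunc k) L)
        ((IsScalarTower.toAlgHom k (Polynomial k) (RatFunc k)) X) := by
      simp [hxL, RatFunc.algebraMap_X]
    rw [hxL', aeval_algHom_apply, aeval_algHom_apply, aeval_X_left_apply, hφ]
    simp
  have hmemR0 : ∀ p : Polynomial k, φ p ∈ R0 := by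
    intro p
    rw [hR0, Algebra.adjoin_singleton_eq_range_aeval]
    exact ⟨p, haev p⟩
  have hR0elem : ∀ z : L, z ∈ R0 → ∃ p : Polynomial k, φ p = z := by
    intro z hz
    rw [hR0, Algebra.adjoin_singleton_eq_range_aeval] at hz
    obtain ⟨p, hp⟩ := hz
    exact ⟨p, by rw [← haev]; exact hp⟩
  have hφmul : ∀ a b, φ (a * b) = φ a * φ b := by intro a b; simp [hφ, map_mul]
  have hφsub : ∀ a b, φ (a - b) = φ a - φ b := by intro a b; simp [hφ, map_sub]
  have hφzero : φ 0 = 0 := by simp [hφ]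
  -- the k[x]-level linear independence, in explicit form
  have key0 : ∀ p q r : Polynomial k, φ p + φ q * α₁ + φ r * α₂ = 0 →
      p = 0 ∧ q = 0 ∧ r = 0 := by
    intro p q r h
    have h3 := Fintype.linearIndependent_iff.mp hindep0
      ![⟨φ p, hmemR0 p⟩, ⟨φ q, hmemR0 q⟩, ⟨φ r, hmemR0 r⟩] ?side
    case side =>
      simpa [Fin.sum_univ_three, Subalgebra.smul_def, smul_eq_mul] using h
    · refine ⟨hφinj ?_, hφinj ?_, hφinj ?_⟩ <;> rw [hφzero]
      · exact congrArg Subtype.val (h3 0)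
      · exact congrArg Subtype.val (h3 1)
      · exact congrArg Subtype.val (h3 2)
  -- consequences of associativity: g₀ = f₃f₀, g₁ = f₁f₃, g₂ = f₀f₂
  have e1 := key0 (f₃ * g₂ - f₂ * g₀) (g₀ - f₃ * f₀) (f₁ * f₃ - g₁) (by
    simp only [hφsub, hφmul]
    linear_combination (-α₂) * htable1 + φ f₃ * htable2 + (α₁ - φ f₂) * htable0)
  have e2 := key0 (f₁ * g₀ - f₀ * g₁) (f₀ * f₂ - g₂) (g₀ - f₀ * f₃) (by
    simp only [hφsub, hφmul]
    linear_combination (-α₁) * htable2 - φ f₀ * htable1 + (α₂ + φ f₁) * htable0)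
  have hg0 : g₀ = f₃ * f₀ := sub_eq_zero.mp e1.2.1
  have hg1 : g₁ = f₁ * f₃ := (sub_eq_zero.mp e1.2.2).symm
  have hg2 : g₂ = f₀ * f₂ := (sub_eq_zero.mp e2.2.1).symm
  -- f₃ ≠ 0
  have hf₃ : f₃ ≠ 0 := by
    intro hf
    have hg0' : g₀ = 0 := by rw [hg0, hf, zero_mul]
    have : α₁ * α₂ = 0 := by rw [htable0, hg0', hφzero, neg_zero]
    rcases mul_eq_zero.mp this with h | h
    · have := key0 0 1 0 (by simp [hφzero, hφ, map_one, h])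
      exact one_ne_zero this.2.1
    · have := key0 0 0 1 (by simp [hφzero, hφ, map_one, h])
      exact one_ne_zero this.2.2
  have ha : φ f₃ ≠ 0 := by
    intro h0
    exact hf₃ (hφinj (by rw [h0, hφzero]))
  -- the root
  set τ : L := -((φ f₃)⁻¹ * α₁) with hτdef
  have hτ : φ f₃ * τ = -α₁ := by
    rw [hτdef]; field_simp
  have hg1' : φ g₁ = φ f₁ * φ f₃ := by rw [hg1, hφmul]
  have hg0' : φ g₀ = φ f₃ * φ f₀ := by rw [hg0, hφmul]
  have hstep : -(α₁ * α₁ * α₁) + φ f₂ * (α₁ * α₁) - φ g₁ * α₁ + φ f₃ * φ g₀ = 0 := by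
    linear_combination (-α₁) * htable1 + φ f₃ * htable0
  have h2 : φ f₃ * φ f₃ * (φ f₃ * τ ^ 3 + φ f₂ * τ ^ 2 + φ f₁ * τ + φ f₀) = 0 := by
    rw [hg1', hg0'] at hstep
    linear_combination hstep + (φ f₃ ^ 2 * τ ^ 2 - φ f₃ * τ * α₁ + α₁ ^ 2
      + φ f₂ * φ f₃ * τ - φ f₂ * α₁ + φ f₁ * φ f₃) * hτ
  have hroot : φ f₃ * τ ^ 3 + φ f₂ * τ ^ 2 + φ f₁ * τ + φ f₀ = 0 :=
    (mul_eq_zero.mp h2).resolve_left (mul_ne_zero ha ha)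
  have hα₂ : φ f₃ * τ ^ 2 + φ f₂ * τ + φ f₁ = -α₂ := by
    refine mul_left_cancel₀ ha ?_
    linear_combination htable1 - hg1' + (φ f₃ * τ - α₁ + φ f₂) * hτ
  -- linear independence over RatFunc k
  have hd : ∀ c : RatFunc k, c * algebraMap (Polynomial k) (RatFunc k) c.denom
      = algebraMap (Polynomial k) (RatFunc k) c.num := by
    intro c
    have hne : algebraMap (Polynomial k) (RatFunc k) c.denom ≠ 0 :=
      (map_ne_zero_iff _ (IsFractionRing.injective (Polynomial k) (RatFunc k))).mpr
        (RatFunc.denom_ne_zero c)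
    exact ((div_eq_iff hne).mp (RatFunc.num_div_denom c)).symm
  have keyK : ∀ c0 c1 c2 : RatFunc k,
      algebraMap (RatFunc k) L c0 + algebraMap (RatFunc k) L c1 * α₁
        + algebraMap (RatFunc k) L c2 * α₂ = 0 → c0 = 0 ∧ c1 = 0 ∧ c2 = 0 := by
    intro c0 c1 c2 h
    have e0 : φ (c0.num * c1.denom * c2.denom) = algebraMap (RatFunc k) L c0 *
        algebraMap (RatFunc k) L (algebraMap (Polynomial k) (RatFunc k)
          (c0.denom * c1.denom * c2.denom)) := by
      rw [hφ, ← map_mul]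
      congr 1
      rw [map_mul, map_mul, map_mul, map_mul]
      linear_combination (-(algebraMap (Polynomial k) (RatFunc k) c1.denom *
        algebraMap (Polynomial k) (RatFunc k) c2.denom)) * hd c0
    have e1' : φ (c0.denom * c1.num * c2.denom) = algebraMap (RatFunc k) L c1 *
        algebraMap (RatFunc k) L (algebraMap (Polynomial k) (RatFunc k)
          (c0.denom * c1.denom * c2.denom)) := by
      rw [hφ, ← map_mul]
      congr 1
      rw [map_mul, map_mul, map_mul, map_mul]
      linear_combination (-(algebraMap (Polynomial k) (RatFunc k) c0.denom *
        algebraMap (Polynomial k) (RatFunc k) c2.denom)) * hd c1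
    have e2' : φ (c0.denom * c1.denom * c2.num) = algebraMap (RatFunc k) L c2 *
        algebraMap (RatFunc k) L (algebraMap (Polynomial k) (RatFunc k)
          (c0.denom * c1.denom * c2.denom)) := by
      rw [hφ, ← map_mul]
      congr 1
      rw [map_mul, map_mul, map_mul, map_mul]
      linear_combination (-(algebraMap (Polynomial k) (RatFunc k) c0.denom *
        algebraMap (Polynomial k) (RatFunc k) c1.denom)) * hd c2
    obtain ⟨h0, h1, h2'⟩ := key0 (c0.num * c1.denom * c2.denom)
      (c0.denom * c1.num * c2.denom) (c0.denom * c1.denom * c2.num) (by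
      rw [e0, e1', e2']
      linear_combination (algebraMap (RatFunc k) L (algebraMap (Polynomial k) (RatFunc k)
        (c0.denom * c1.denom * c2.denom))) * h)
    have hden : ∀ c : RatFunc k, c.denom ≠ 0 := RatFunc.denom_ne_zero
    refine ⟨?_, ?_, ?_⟩
    · rcases mul_eq_zero.mp h0 with h' | h'
      · rcases mul_eq_zero.mp h' with h'' | h''
        · exact RatFunc.num_eq_zero_iff.mp h''
        · exact absurd h'' (hden c1)
      · exact absurd h' (hden c2)
    · rcases mul_eq_zero.mp h1 with h' | h'
      · rcases mul_eq_zero.mp h' with h'' | h''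
        · exact absurd h'' (hden c0)
        · exact RatFunc.num_eq_zero_iff.mp h''
      · exact absurd h' (hden c2)
    · rcases mul_eq_zero.mp h2' with h' | h'
      · rcases mul_eq_zero.mp h' with h'' | h''
        · exact absurd h'' (hden c0)
        · exact absurd h'' (hden c1)
      · exact RatFunc.num_eq_zero_iff.mp h'
  have hindepK : LinearIndependent (RatFunc k) ![(1 : L), α₁, α₂] := by
    rw [Fintype.linearIndependent_iff]
    intro g hg
    obtain ⟨h0, h1, h2'⟩ := keyK (g 0) (g 1) (g 2)
      (by simpa [Fin.sum_univ_three, Algebra.smul_def] using hg)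
    intro i
    fin_cases i <;> assumption
  have hcard : Fintype.card (Fin 3) = Module.finrank (RatFunc k) L := by simp [hdim]
  have hsp : Submodule.span (RatFunc k) (Set.range ![(1 : L), α₁, α₂]) = ⊤ := by
    rw [← coe_basisOfLinearIndependentOfCardEqFinrank hindepK hcard]
    exact Module.Basis.span_eq _
  have hspanK : ∀ z : L, ∃ c : Fin 3 → RatFunc k,
      algebraMap (RatFunc k) L (c 0) + algebraMap (RatFunc k) L (c 1) * α₁
        + algebraMap (RatFunc k) L (c 2) * α₂ = z := by
    intro z
    have hz : z ∈ Submodule.span (RatFunc k) (Set.range ![(1 : L), α₁, α₂]) := by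
      rw [hsp]; trivial
    obtain ⟨c, hc⟩ := (Submodule.mem_span_range_iff_exists_fun _).mp hz
    refine ⟨c, ?_⟩
    simpa [Fin.sum_univ_three, Algebra.smul_def] using hc
  -- field theory: τ generates L, minpoly has degree 3
  haveI hFD : FiniteDimensional (RatFunc k) L := FiniteDimensional.of_finrank_eq_succ hdim
  have hint : IsIntegral (RatFunc k) τ := IsIntegral.of_finite (RatFunc k) τ
  have hτmem : τ ∈ IntermediateField.adjoin (RatFunc k) {τ} :=
    IntermediateField.mem_adjoin_simple_self _ τ
  have hα₁mem : α₁ ∈ IntermediateField.adjoin (RatFunc k) {τ} := by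
    have hα₁ : α₁ = -(φ f₃ * τ) := by linear_combination hτ
    rw [hα₁, hφ]
    exact neg_mem (mul_mem (IntermediateField.algebraMap_mem _ _) hτmem)
  have hα₂mem : α₂ ∈ IntermediateField.adjoin (RatFunc k) {τ} := by
    have hα₂' : α₂ = -(φ f₃ * τ ^ 2 + φ f₂ * τ + φ f₁) := by linear_combination hα₂
    rw [hα₂', hφ f₃, hφ f₂, hφ f₁]
    exact neg_mem (add_mem (add_mem
      (mul_mem (IntermediateField.algebraMap_mem _ _) (pow_mem hτmem 2))
      (mul_mem (IntermediateField.algebraMap_mem _ _) hτmem))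
      (IntermediateField.algebraMap_mem _ _))
  have htop : IntermediateField.adjoin (RatFunc k) {τ} = ⊤ := by
    rw [eq_top_iff]
    intro z _
    obtain ⟨c, hc⟩ := hspanK z
    rw [← hc]
    exact add_mem (add_mem (IntermediateField.algebraMap_mem _ _)
      (mul_mem (IntermediateField.algebraMap_mem _ _) hα₁mem))
      (mul_mem (IntermediateField.algebraMap_mem _ _) hα₂mem)
  have hmindeg : (minpoly (RatFunc k) τ).natDegree = 3 := by
    rw [← IntermediateField.adjoin.finrank hint, htop, IntermediateField.finrank_top', hdim]
  have hPdeg : P.natDegree = 3 := by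
    rw [hP, hψ f₃, hψ f₂, hψ f₁, hψ f₀]
    compute_degree!
  have hP0 : P ≠ 0 := fun h => by simp [h] at hPdeg
  have hPτ : Polynomial.aeval τ P = 0 := by
    rw [hP]
    simp only [hψ, map_add, map_mul, map_pow, aeval_X, aeval_C]
    rw [← hφ f₃, ← hφ f₂, ← hφ f₁, ← hφ f₀]
    exact hroot
  obtain ⟨q, hq⟩ := minpoly.dvd (RatFunc k) τ hPτ
  have hmne : minpoly (RatFunc k) τ ≠ 0 := minpoly.ne_zero hint
  have hqne : q ≠ 0 := by rintro rfl; rw [mul_zero] at hq; exact hP0 hq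
  have hqdeg : q.natDegree = 0 := by
    have hdeq := congrArg Polynomial.natDegree hq
    rw [Polynomial.natDegree_mul hmne hqne, hPdeg, hmindeg] at hdeq
    omega
  obtain ⟨cq, hcq⟩ := Polynomial.natDegree_eq_zero.mp hqdeg
  have hcqne : cq ≠ 0 := by rintro rfl; rw [map_zero] at hcq; exact hqne hcq.symm
  have hqunit : IsUnit q := by
    rw [← hcq]; exact Polynomial.isUnit_C.mpr (isUnit_iff_ne_zero.mpr hcqne)
  obtain ⟨vq, hvq⟩ := hqunit
  have hassoc : Associated (minpoly (RatFunc k) τ) P := ⟨vq, by rw [hvq, ← hq]⟩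
  have hirr : Irreducible P := hassoc.irreducible (minpoly.irreducible hint)
  haveI : Fact (Irreducible P) := ⟨hirr⟩
  -- the isomorphism
  have hPτ' : P.eval₂ (Algebra.ofId (RatFunc k) L : RatFunc k →+* L) τ = 0 := hPτ
  have hARinj : Function.Injective (AdjoinRoot.liftAlgHom P (Algebra.ofId _ _) τ hPτ') :=
    (AdjoinRoot.liftAlgHom P (Algebra.ofId _ _) τ hPτ').toRingHom.injective
  haveI : FiniteDimensional (RatFunc k) (AdjoinRoot P) :=
    Module.Finite.of_basis (AdjoinRoot.powerBasis hP0).basis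
  have hfr : Module.finrank (RatFunc k) (AdjoinRoot P) = Module.finrank (RatFunc k) L := by
    rw [(AdjoinRoot.powerBasis hP0).finrank, AdjoinRoot.powerBasis_dim, hPdeg, hdim]
  have hARsurj : Function.Surjective (AdjoinRoot.liftAlgHom P (Algebra.ofId _ _) τ hPτ') :=
    (LinearMap.injective_iff_surjective_of_finrank_eq_finrank
      (f := (AdjoinRoot.liftAlgHom P (Algebra.ofId _ _) τ hPτ').toLinearMap) hfr).mp hARinj
  let E : (Polynomial (RatFunc k) ⧸ Ideal.span {P}) ≃ₐ[RatFunc k] L :=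
    AlgEquiv.ofBijective (AdjoinRoot.liftAlgHom P (Algebra.ofId _ _) τ hPτ') ⟨hARinj, hARsurj⟩
  have hφneg : ∀ a, φ (-a) = -φ a := by intro a; simp [hφ]
  -- values of E on the distinguished elements
  have hEχ : ∀ p : Polynomial k, E (χ p) = φ p := by
    intro p
    rw [hχ, hψ]
    show (AdjoinRoot.liftAlgHom P (Algebra.ofId _ _) τ hPτ') (AdjoinRoot.mk P (C _)) = _
    rw [AdjoinRoot.liftAlgHom_mk, Algebra.toRingHom_ofId, ← aeval_def, aeval_C, hφ]
  have hEu : E u = -α₁ := by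
    rw [hu, hψ]
    show (AdjoinRoot.liftAlgHom P (Algebra.ofId _ _) τ hPτ') (AdjoinRoot.mk P _) = _
    rw [AdjoinRoot.liftAlgHom_mk, Algebra.toRingHom_ofId, ← aeval_def, map_mul, aeval_C, aeval_X, ← hφ f₃]
    exact hτ
  have hEw : E w = -α₂ := by
    rw [hw, hψ f₃, hψ f₂, hψ f₁]
    show (AdjoinRoot.liftAlgHom P (Algebra.ofId _ _) τ hPτ') (AdjoinRoot.mk P _) = _
    rw [AdjoinRoot.liftAlgHom_mk, Algebra.toRingHom_ofId, ← aeval_def, map_add, map_add, map_mul, map_mul, map_pow,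
      aeval_C, aeval_C, aeval_C, aeval_X, ← hφ f₃, ← hφ f₂, ← hφ f₁]
    exact hα₂
  have hEsum : ∀ p q r : Polynomial k,
      E (χ p + χ q * u + χ r * w) = φ p - φ q * α₁ - φ r * α₂ := by
    intro p q r
    rw [map_add, map_add, map_mul, map_mul, hEχ, hEχ, hEχ, hEu, hEw]
    ring
  -- membership description of the integral closure
  have hIC : ∀ z : L, z ∈ integralClosure ↥R0 L ↔
      ∃ p q r : Polynomial k, z = φ p + φ q * α₁ + φ r * α₂ := by
    intro z
    rw [← Subalgebra.mem_toSubmodule, ← hspan0, Submodule.mem_span_range_iff_exists_fun]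
    constructor
    · rintro ⟨c, hc⟩
      obtain ⟨p, hp⟩ := hR0elem _ (c 0).2
      obtain ⟨q, hq'⟩ := hR0elem _ (c 1).2
      obtain ⟨r, hr⟩ := hR0elem _ (c 2).2
      refine ⟨p, q, r, ?_⟩
      rw [← hc]
      simp only [Fin.sum_univ_three, Subalgebra.smul_def, smul_eq_mul,
        Matrix.cons_val_zero, Matrix.cons_val_one, Matrix.head_cons,
        Matrix.cons_val_two, Matrix.tail_cons]
      rw [hp, hq', hr]
      ring
    · rintro ⟨p, q, r, rfl⟩
      refine ⟨![⟨φ p, hmemR0 p⟩, ⟨φ q, hmemR0 q⟩, ⟨φ r, hmemR0 r⟩], ?_⟩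
      simp only [Fin.sum_univ_three, Subalgebra.smul_def, smul_eq_mul,
        Matrix.cons_val_zero, Matrix.cons_val_one, Matrix.head_cons,
        Matrix.cons_val_two, Matrix.tail_cons]
      ring
  refine ⟨hirr, E.symm, ?_, ?_⟩
  · ext z
    simp only [Set.mem_image, Set.mem_setOf_eq, SetLike.mem_coe]
    constructor
    · rintro ⟨y, hy, rfl⟩
      obtain ⟨p, q, r, hy'⟩ := (hIC y).mp hy
      refine ⟨p, -q, -r, ?_⟩
      rw [AlgEquiv.symm_apply_eq, hEsum, hφneg, hφneg]
      linear_combination hy'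
    · rintro ⟨p, q, r, rfl⟩
      refine ⟨E (χ p + χ q * u + χ r * w), ?_, E.symm_apply_apply _⟩
      apply (hIC _).mpr
      refine ⟨p, -q, -r, ?_⟩
      rw [hEsum, hφneg, hφneg]
      ring
  · intro p q r p' q' r' hEq
    have happ := congrArg E hEq
    rw [hEsum, hEsum] at happ
    obtain ⟨h0, h1, h2'⟩ := key0 (p - p') (q' - q) (r' - r) (by
      rw [hφsub, hφsub, hφsub]
      linear_combination happ)
    exact ⟨sub_eq_zero.mp h0, (sub_eq_zero.mp h1).symm, (sub_eq_zero.mp h2').symm⟩
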